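/- Integration-by-parts bound for the oscillatory finite-difference remainder (key estimate in the proof of Lemma 3.3): let h > 0, ω ∈ ℝ, and let f : ℝ → E be continuously differentiable on [0,h] with derivative f'. Then ‖(1/h) · ∫₀ʰ s · (iω) · e^{iωs} · f(s) ds‖ ≤ min{ |ω| · (h/2) · sup_{s∈[0,h]} ‖f(s)‖ , 2 · sup_{s∈[0,h]} ‖f(s)‖ + (h/2) · sup_{s∈[0,h]} ‖f'(s)‖ }. -/

import Mathlib

/-- Integration-by-parts bound for the oscillatory finite-difference
remainder: for `h > 0`, `ω ∈ ℝ` and `f : ℝ → E` continuously differentiable on `[0,h]`,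
`‖(1/h)·∫₀ʰ s·(iω)·e^{iωs}·f(s) ds‖` is bounded by the minimum of
`|ω|·(h/2)·sup‖f‖` and `2·sup‖f‖ + (h/2)·sup‖f'‖`. -/
theorem oscillatory_finite_difference_remainder_bound
    {E : Type*} [NormedAddCommGroup E] [NormedSpace ℂ E] [CompleteSpace E]
    (h : ℝ) (hh : 0 < h) (ω : ℝ) (f f' : ℝ → E)
    (hderiv : ∀ s ∈ Set.Icc (0 : ℝ) h, HasDerivAt f (f' s) s)
    (hcont : ContinuousOn f' (Set.Icc (0 : ℝ) h)) :
    ‖(1 / h) • ∫ s in (0:ℝ)..h,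
        (((s : ℂ) * (Complex.I * (ω : ℂ)) *
          Complex.exp (Complex.I * (ω : ℂ) * (s : ℂ))) • f s)‖ ≤
      min (|ω| * (h / 2) * ⨆ s : Set.Icc (0 : ℝ) h, ‖f s‖)
        (2 * (⨆ s : Set.Icc (0 : ℝ) h, ‖f s‖) +
          (h / 2) * ⨆ s : Set.Icc (0 : ℝ) h, ‖f' s‖) := by
  have hfc : ContinuousOn f (Set.Icc 0 h) := fun s hs =>
    (hderiv s hs).continuousAt.continuousWithinAt
  set M := ⨆ s : Set.Icc (0 : ℝ) h, ‖f s‖ with hMdef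
  set M' := ⨆ s : Set.Icc (0 : ℝ) h, ‖f' s‖ with hM'def
  have hbdd : BddAbove (Set.range fun s : Set.Icc (0:ℝ) h => ‖f s‖) :=
    (isCompact_range (continuous_norm.comp
      (continuousOn_iff_continuous_restrict.mp hfc))).bddAbove
  have hbdd' : BddAbove (Set.range fun s : Set.Icc (0:ℝ) h => ‖f' s‖) :=
    (isCompact_range (continuous_norm.comp
      (continuousOn_iff_continuous_restrict.mp hcont))).bddAbove
  have hMle : ∀ s ∈ Set.Icc (0:ℝ) h, ‖f s‖ ≤ M := fun s hs => le_ciSup hbdd ⟨s, hs⟩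
  have hM'le : ∀ s ∈ Set.Icc (0:ℝ) h, ‖f' s‖ ≤ M' := fun s hs => le_ciSup hbdd' ⟨s, hs⟩
  have hM0 : 0 ≤ M := (norm_nonneg _).trans (hMle 0 ⟨le_refl 0, hh.le⟩)
  have hM'0 : 0 ≤ M' := (norm_nonneg _).trans (hM'le 0 ⟨le_refl 0, hh.le⟩)
  have huIcc : Set.uIcc (0:ℝ) h = Set.Icc 0 h := Set.uIcc_of_le hh.le
  have hexp : ∀ s : ℝ, ‖Complex.exp (Complex.I * ω * s)‖ = 1 := by
    intro s
    rw [Complex.norm_exp]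
    simp [Complex.mul_re]
  have hnorm_smul : ‖(1 / h) • ∫ s in (0:ℝ)..h,
      (((s : ℂ) * (Complex.I * (ω : ℂ)) *
        Complex.exp (Complex.I * (ω : ℂ) * (s : ℂ))) • f s)‖
      = (1/h) * ‖∫ s in (0:ℝ)..h,
      (((s : ℂ) * (Complex.I * (ω : ℂ)) *
        Complex.exp (Complex.I * (ω : ℂ) * (s : ℂ))) • f s)‖ := by
    rw [norm_smul, Real.norm_eq_abs, abs_of_pos (by positivity)]
  rw [le_min_iff, hnorm_smul]
  constructor
  · -- Bound 1 : crude bound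
    have hb : ‖∫ s in (0:ℝ)..h,
        (((s : ℂ) * (Complex.I * (ω : ℂ)) *
          Complex.exp (Complex.I * (ω : ℂ) * (s : ℂ))) • f s)‖
        ≤ |∫ s in (0:ℝ)..h, (|ω| * M * s)| := by
      apply intervalIntegral.norm_integral_le_abs_of_norm_le
      · rw [MeasureTheory.ae_restrict_iff' measurableSet_uIoc]
        filter_upwards [] with s hs
        rw [Set.uIoc_of_le hh.le] at hs
        have hs0 : 0 < s := hs.1
        have hsh : s ≤ h := hs.2
        rw [norm_smul, norm_mul, norm_mul]
        have h1 : ‖Complex.I * (ω:ℂ)‖ = |ω| := by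
          simp [map_mul]
        rw [h1, hexp, Complex.norm_real, Real.norm_eq_abs, abs_of_pos hs0]
        calc s * |ω| * 1 * ‖f s‖ ≤ s * |ω| * 1 * M := by
              apply mul_le_mul_of_nonneg_left (hMle s ⟨hs0.le, hsh⟩) (by positivity)
          _ = |ω| * M * s := by ring
      · exact (continuous_const.mul continuous_id).intervalIntegrable _ _
    have hval : (∫ s in (0:ℝ)..h, (|ω| * M * s)) = |ω| * M * (h^2/2) := by
      rw [intervalIntegral.integral_const_mul, integral_id]
      ring
    rw [hval] at hb
    have : (1/h) * ‖∫ s in (0:ℝ)..h,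
        (((s : ℂ) * (Complex.I * (ω : ℂ)) *
          Complex.exp (Complex.I * (ω : ℂ) * (s : ℂ))) • f s)‖
        ≤ (1/h) * (|ω| * M * (h^2/2)) := by
      apply mul_le_mul_of_nonneg_left _ (by positivity)
      calc _ ≤ |(|ω| * M * (h^2/2))| := hb
        _ = |ω| * M * (h^2/2) := abs_of_nonneg (by positivity)
    refine this.trans_eq ?_
    field_simp
  · -- Bound 2 : integration by parts
    have hcexp : Continuous fun s : ℝ => Complex.exp (Complex.I * ω * s) :=
      Complex.continuous_exp.comp (continuous_const.mul Complex.continuous_ofReal)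
    have hcg : Continuous fun s : ℝ => (s:ℂ) * Complex.exp (Complex.I * ω * s) :=
      Complex.continuous_ofReal.mul hcexp
    have hg' : ∀ s : ℝ, HasDerivAt (fun t : ℝ => (t:ℂ) * Complex.exp (Complex.I * ω * t))
        (Complex.exp (Complex.I * ω * s) + (s:ℂ) * (Complex.I * ω) *
          Complex.exp (Complex.I * ω * s)) s := by
      intro s
      have h1 : HasDerivAt (fun t : ℝ => (t:ℂ)) 1 s := by
        simpa using (hasDerivAt_id s).ofReal_comp
      have h2 : HasDerivAt (fun t : ℝ => Complex.I * ω * (t:ℂ)) (Complex.I * ω) s := by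
        simpa using h1.const_mul (Complex.I * (ω:ℂ))
      have h3 : HasDerivAt (fun t : ℝ => Complex.exp (Complex.I * ω * t))
          (Complex.exp (Complex.I * ω * s) * (Complex.I * ω)) s := h2.cexp
      have := h1.mul h3
      refine this.congr_deriv ?_
      ring
    have hG : ∀ s ∈ Set.uIcc (0:ℝ) h, HasDerivAt
        (fun t : ℝ => ((t:ℂ) * Complex.exp (Complex.I * ω * t)) • f t)
        (((s:ℂ) * Complex.exp (Complex.I * ω * s)) • f' s +
          (Complex.exp (Complex.I * ω * s) + (s:ℂ) * (Complex.I * ω) *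
            Complex.exp (Complex.I * ω * s)) • f s) s := by
      intro s hs
      rw [huIcc] at hs
      exact (hg' s).smul (hderiv s hs)
    -- integrability facts
    have hintD : IntervalIntegrable (fun s : ℝ =>
        ((s:ℂ) * Complex.exp (Complex.I * ω * s)) • f' s +
          (Complex.exp (Complex.I * ω * s) + (s:ℂ) * (Complex.I * ω) *
            Complex.exp (Complex.I * ω * s)) • f s) MeasureTheory.volume 0 h := by
      apply ContinuousOn.intervalIntegrable
      rw [huIcc]
      exact ((hcg.continuousOn.smul hcont).add
        (((hcexp.add ((Complex.continuous_ofReal.mul continuous_const).mul hcexp)).continuousOn).smul hfc))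
    have hint1 : IntervalIntegrable (fun s : ℝ =>
        Complex.exp (Complex.I * ω * s) • f s) MeasureTheory.volume 0 h := by
      apply ContinuousOn.intervalIntegrable
      rw [huIcc]
      exact hcexp.continuousOn.smul hfc
    have hint2 : IntervalIntegrable (fun s : ℝ =>
        ((s:ℂ) * Complex.exp (Complex.I * ω * s)) • f' s) MeasureTheory.volume 0 h := by
      apply ContinuousOn.intervalIntegrable
      rw [huIcc]
      exact hcg.continuousOn.smul hcont
    have hFTC : (∫ s in (0:ℝ)..h,
        (((s:ℂ) * Complex.exp (Complex.I * ω * s)) • f' s +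
          (Complex.exp (Complex.I * ω * s) + (s:ℂ) * (Complex.I * ω) *
            Complex.exp (Complex.I * ω * s)) • f s))
        = ((h:ℂ) * Complex.exp (Complex.I * ω * h)) • f h -
          (((0:ℝ):ℂ) * Complex.exp (Complex.I * ω * (0:ℝ))) • f 0 :=
      intervalIntegral.integral_eq_sub_of_hasDerivAt hG hintD
    have hsplit : (∫ s in (0:ℝ)..h,
        (((s : ℂ) * (Complex.I * (ω : ℂ)) *
          Complex.exp (Complex.I * (ω : ℂ) * (s : ℂ))) • f s))
        = ((h:ℂ) * Complex.exp (Complex.I * ω * h)) • f h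
          - (∫ s in (0:ℝ)..h, Complex.exp (Complex.I * ω * s) • f s)
          - (∫ s in (0:ℝ)..h, ((s:ℂ) * Complex.exp (Complex.I * ω * s)) • f' s) := by
      have heq : ∀ s : ℝ, (((s : ℂ) * (Complex.I * (ω : ℂ)) *
          Complex.exp (Complex.I * (ω : ℂ) * (s : ℂ))) • f s)
          = (((s:ℂ) * Complex.exp (Complex.I * ω * s)) • f' s +
            (Complex.exp (Complex.I * ω * s) + (s:ℂ) * (Complex.I * ω) *
              Complex.exp (Complex.I * ω * s)) • f s)
            - Complex.exp (Complex.I * ω * s) • f s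
            - ((s:ℂ) * Complex.exp (Complex.I * ω * s)) • f' s := by
        intro s
        simp only [add_smul]
        abel
      rw [intervalIntegral.integral_congr (fun s _ => heq s),
        intervalIntegral.integral_sub (hintD.sub hint1) hint2,
        intervalIntegral.integral_sub hintD hint1, hFTC]
      simp
    rw [hsplit]
    have hb1 : ‖((h:ℂ) * Complex.exp (Complex.I * ω * h)) • f h‖ ≤ h * M := by
      rw [norm_smul, norm_mul, hexp, Complex.norm_real, Real.norm_eq_abs,
        abs_of_pos hh, mul_one]
      exact mul_le_mul_of_nonneg_left (hMle h ⟨hh.le, le_refl h⟩) hh.le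
    have hb2 : ‖∫ s in (0:ℝ)..h, Complex.exp (Complex.I * ω * s) • f s‖ ≤ h * M := by
      have := intervalIntegral.norm_integral_le_of_norm_le_const
        (a := (0:ℝ)) (b := h) (C := M)
        (f := fun s => Complex.exp (Complex.I * ω * s) • f s) ?_
      · simpa [abs_of_pos hh, mul_comm] using this
      · intro s hs
        rw [Set.uIoc_of_le hh.le] at hs
        rw [norm_smul, hexp, one_mul]
        exact hMle s ⟨hs.1.le, hs.2⟩
    have hb3 : ‖∫ s in (0:ℝ)..h, ((s:ℂ) * Complex.exp (Complex.I * ω * s)) • f' s‖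
        ≤ h^2/2 * M' := by
      have hb : ‖∫ s in (0:ℝ)..h, ((s:ℂ) * Complex.exp (Complex.I * ω * s)) • f' s‖
          ≤ |∫ s in (0:ℝ)..h, (M' * s)| := by
        apply intervalIntegral.norm_integral_le_abs_of_norm_le
        · rw [MeasureTheory.ae_restrict_iff' measurableSet_uIoc]
          filter_upwards [] with s hs
          rw [Set.uIoc_of_le hh.le] at hs
          rw [norm_smul, norm_mul, hexp, mul_one, Complex.norm_real,
            Real.norm_eq_abs, abs_of_pos hs.1]
          calc s * ‖f' s‖ ≤ s * M' :=
                mul_le_mul_of_nonneg_left (hM'le s ⟨hs.1.le, hs.2⟩) hs.1.le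
            _ = M' * s := mul_comm _ _
        · exact (continuous_const.mul continuous_id).intervalIntegrable _ _
      have hval : (∫ s in (0:ℝ)..h, (M' * s)) = M' * (h^2/2) := by
        rw [intervalIntegral.integral_const_mul, integral_id]
        ring
      rw [hval] at hb
      calc _ ≤ |M' * (h^2/2)| := hb
        _ = h^2/2 * M' := by rw [abs_of_nonneg (by positivity)]; ring
    have hfin : ‖((h:ℂ) * Complex.exp (Complex.I * ω * h)) • f h
          - (∫ s in (0:ℝ)..h, Complex.exp (Complex.I * ω * s) • f s)
          - (∫ s in (0:ℝ)..h, ((s:ℂ) * Complex.exp (Complex.I * ω * s)) • f' s)‖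
        ≤ (h * M + h * M) + h^2/2 * M' :=
      le_trans (norm_sub_le _ _)
        (add_le_add (le_trans (norm_sub_le _ _) (add_le_add hb1 hb2)) hb3)
    calc (1/h) * ‖((h:ℂ) * Complex.exp (Complex.I * ω * h)) • f h
          - (∫ s in (0:ℝ)..h, Complex.exp (Complex.I * ω * s) • f s)
          - (∫ s in (0:ℝ)..h, ((s:ℂ) * Complex.exp (Complex.I * ω * s)) • f' s)‖
        ≤ (1/h) * ((h * M + h * M) + h^2/2 * M') :=
          mul_le_mul_of_nonneg_left hfin (by positivity)
      _ = 2 * M + (h / 2) * M' := by field_simp; ring
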